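/- Between two σ-finite measure spaces (respectively, semifinite von Neumann algebras with normal semifinite faithful traces), a doubly stochastic map exists if and only if the total measures (respectively, the traces of the identities) agree: DS(M → N) ≠ ∅ iff Tr_M(1) = Tr_N(1). -/

import Mathlib

open MeasureTheory Set
open scoped ENNReal

namespace DSaux
variable {X : Type*} [MeasurableSpace X]

noncomputable def pc (μ : Measure X) [SigmaFinite μ] (n : ℕ) : Set X :=
  disjointed (spanningSets μ) n

noncomputable def am (μ : Measure X) [SigmaFinite μ] (n : ℕ) : ℝ≥0∞ := μ (pc μ n)

variable (μ : Measure X) [SigmaFinite μ]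

lemma measurableSet_pc (n : ℕ) : MeasurableSet (pc μ n) :=
  MeasurableSet.disjointed (fun i => measurableSet_spanningSets μ i) n

lemma pairwise_disjoint_pc : Pairwise (Function.onFun Disjoint (pc μ)) := disjoint_disjointed _

lemma iUnion_pc : ⋃ n, pc μ n = univ := by
  simp only [pc, iUnion_disjointed, iUnion_spanningSets]

lemma am_ne_top (n : ℕ) : am μ n ≠ ⊤ :=
  ((measure_mono (disjointed_subset _ _)).trans_lt (measure_spanningSets_lt_top μ n)).ne

lemma tsum_am : ∑' n, am μ n = μ univ := by
  rw [← iUnion_pc μ, measure_iUnion (pairwise_disjoint_pc μ) (measurableSet_pc μ)]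
  rfl

noncomputable def ps (μ : Measure X) [SigmaFinite μ] (n : ℕ) : ℝ :=
  ∑ i ∈ Finset.range n, (am μ i).toReal

lemma ps_zero : ps μ 0 = 0 := by simp [ps]

lemma ps_succ (n : ℕ) : ps μ (n + 1) = ps μ n + (am μ n).toReal := by
  simp [ps, Finset.sum_range_succ]

lemma ps_mono : Monotone (ps μ) := by
  apply monotone_nat_of_le_succ
  intro n
  rw [ps_succ]
  exact le_add_of_nonneg_right ENNReal.toReal_nonneg

lemma ps_nonneg (n : ℕ) : 0 ≤ ps μ n := ps_zero μ ▸ ps_mono μ (Nat.zero_le n)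

lemma ps_eq_toReal (n : ℕ) : ps μ n = (∑ i ∈ Finset.range n, am μ i).toReal := by
  rw [ps, ENNReal.toReal_sum (fun i _ => am_ne_top μ i)]

lemma ps_le_toReal (h : μ univ ≠ ⊤) (n : ℕ) : ps μ n ≤ (μ univ).toReal := by
  rw [ps_eq_toReal, ← tsum_am μ]
  exact ENNReal.toReal_mono (tsum_am μ ▸ h) (ENNReal.sum_le_tsum _)

lemma ps_tendsto (h : μ univ ≠ ⊤) :
    Filter.Tendsto (ps μ) Filter.atTop (nhds (μ univ).toReal) := by
  have h1 : Filter.Tendsto (fun n => ∑ i ∈ Finset.range n, am μ i) Filter.atTop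
      (nhds (μ univ)) := tsum_am μ ▸ ENNReal.tendsto_nat_tsum _
  have h2 := (ENNReal.tendsto_toReal h).comp h1
  convert h2 using 1
  funext n
  simp only [Function.comp_apply, ← ps_eq_toReal]

lemma ps_tendsto_top (h : μ univ = ⊤) :
    Filter.Tendsto (ps μ) Filter.atTop Filter.atTop := by
  apply (ps_mono μ).tendsto_atTop_atTop
  intro C
  have h1 : Filter.Tendsto (fun n => ∑ i ∈ Finset.range n, am μ i) Filter.atTop
      (nhds (μ univ)) := tsum_am μ ▸ ENNReal.tendsto_nat_tsum _
  rw [h] at h1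
  have h2 : ∀ᶠ n in Filter.atTop, ENNReal.ofReal (max C 0) < ∑ i ∈ Finset.range n, am μ i := by
    exact h1.eventually (eventually_gt_nhds ENNReal.ofReal_lt_top)
  obtain ⟨n, hn⟩ := h2.exists
  refine ⟨n, ?_⟩
  rw [ps_eq_toReal]
  have hfin : (∑ i ∈ Finset.range n, am μ i) ≠ ⊤ := by
    refine (ENNReal.sum_lt_top.mpr ?_).ne
    exact fun i _ => (am_ne_top μ i).lt_top
  calc C ≤ max C 0 := le_max_left _ _
    _ ≤ _ := ((ENNReal.ofReal_lt_iff_lt_toReal (le_max_right _ _) hfin).mp hn).le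


variable {Y : Type*} [MeasurableSpace Y] (ν : Measure Y) [SigmaFinite ν]
/-- the interval of the `n`-th piece on the half-line -/
noncomputable def iv (μ : Measure X) [SigmaFinite μ] (n : ℕ) : Set ℝ :=
  Ico (ps μ n) (ps μ (n + 1))

lemma volume_iv (n : ℕ) : volume (iv μ n) = am μ n := by
  rw [iv, Real.volume_Ico, ps_succ, add_sub_cancel_left,
    ENNReal.ofReal_toReal (am_ne_top μ n)]

lemma pairwise_disjoint_iv : Pairwise (Function.onFun Disjoint (iv μ)) := by
  have key : ∀ i j : ℕ, i < j → Disjoint (iv μ i) (iv μ j) := by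
    intro i j hij
    rw [iv, iv, Set.Ico_disjoint_Ico]
    exact le_trans (min_le_left _ _) (le_trans (ps_mono μ hij) (le_max_right _ _))
  intro i j hij
  rcases hij.lt_or_gt with h | h
  · exact key i j h
  · exact (key j i h).symm

lemma iv_subset_iUnion (H : μ univ = ν univ) (n : ℕ) : iv μ n ⊆ ⋃ m, iv ν m := by
  intro x hx
  obtain ⟨hx0, hx1⟩ := hx
  have hx0' : 0 ≤ x := le_trans (ps_nonneg μ n) hx0
  have hex : ∃ M, x < ps ν M := by
    by_cases hT : ν univ = ⊤
    · exact ((ps_tendsto_top ν hT).eventually_gt_atTop x).exists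
    · have hμT : μ univ ≠ ⊤ := fun h => hT (H ▸ h)
      have hxL : x < (ν univ).toReal := by
        calc x < ps μ (n + 1) := hx1
          _ ≤ (μ univ).toReal := ps_le_toReal μ hμT _
          _ = (ν univ).toReal := by rw [H]
      exact ((ps_tendsto ν hT).eventually (eventually_gt_nhds hxL)).exists
  classical
  have h0 : ¬ x < ps ν 0 := by rw [ps_zero]; exact not_lt.2 hx0'
  have hM : x < ps ν (Nat.find hex) := Nat.find_spec hex
  have hM1 : Nat.find hex ≠ 0 := fun h => h0 (h ▸ hM)
  obtain ⟨m, hm'⟩ := Nat.exists_eq_succ_of_ne_zero hM1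
  rw [hm'] at hM
  have hm : ¬ x < ps ν m := by
    have := Nat.find_min hex (m := m) (by omega)
    exact this
  exact mem_iUnion.2 ⟨m, not_lt.1 hm, hM⟩

noncomputable def pp (μ : Measure X) (ν : Measure Y) [SigmaFinite μ] [SigmaFinite ν]
    (n m : ℕ) : ℝ≥0∞ := volume (iv μ n ∩ iv ν m)

lemma pp_symm (n m : ℕ) : pp μ ν n m = pp ν μ m n := by rw [pp, pp, inter_comm]

lemma pp_le_left (n m : ℕ) : pp μ ν n m ≤ am μ n :=
  (measure_mono inter_subset_left).trans (volume_iv μ n).le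

lemma pp_le_right (n m : ℕ) : pp μ ν n m ≤ am ν m :=
  (measure_mono inter_subset_right).trans (volume_iv ν m).le

lemma pp_ne_top (n m : ℕ) : pp μ ν n m ≠ ⊤ :=
  ((pp_le_left μ ν n m).trans_lt (am_ne_top μ n).lt_top).ne

lemma rowsum (H : μ univ = ν univ) (n : ℕ) : ∑' m, pp μ ν n m = am μ n := by
  have hmeas : ∀ m, MeasurableSet (iv μ n ∩ iv ν m) := fun m =>
    (measurableSet_Ico).inter measurableSet_Ico
  have hdisj : Pairwise (Function.onFun Disjoint fun m => iv μ n ∩ iv ν m) := by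
    intro i j hij
    exact ((pairwise_disjoint_iv ν hij).mono inter_subset_right inter_subset_right)
  calc ∑' m, pp μ ν n m = volume (⋃ m, iv μ n ∩ iv ν m) :=
        (measure_iUnion hdisj hmeas).symm
    _ = volume (iv μ n ∩ ⋃ m, iv ν m) := by rw [inter_iUnion]
    _ = volume (iv μ n) := by rw [inter_eq_self_of_subset_left (iv_subset_iUnion μ ν H n)]
    _ = am μ n := volume_iv μ n

lemma colsum (H : μ univ = ν univ) (m : ℕ) : ∑' n, pp μ ν n m = am ν m := by
  simp_rw [pp_symm μ ν]
  exact rowsum ν μ H.symm m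


/-! ### The coefficients -/

noncomputable def cc (μ : Measure X) (ν : Measure Y) [SigmaFinite μ] [SigmaFinite ν]
    (n m : ℕ) : ℝ :=
  (pp μ ν n m).toReal / ((am μ n).toReal * (am ν m).toReal)

lemma cc_nonneg (n m : ℕ) : 0 ≤ cc μ ν n m := by
  apply div_nonneg ENNReal.toReal_nonneg
  exact mul_nonneg ENNReal.toReal_nonneg ENNReal.toReal_nonneg

lemma cc_symm (n m : ℕ) : cc μ ν n m = cc ν μ m n := by
  rw [cc, cc, pp_symm, mul_comm]

lemma pp_toReal_zero_left {n m : ℕ} (h : (am μ n).toReal = 0) : (pp μ ν n m).toReal = 0 := by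
  have h0 : am μ n = 0 := by
    rwa [ENNReal.toReal_eq_zero_iff, or_iff_left (am_ne_top μ n)] at h
  have : pp μ ν n m = 0 := le_antisymm (h0 ▸ pp_le_left μ ν n m) zero_le
  rw [this, ENNReal.toReal_zero]

lemma pp_toReal_zero_right {n m : ℕ} (h : (am ν m).toReal = 0) : (pp μ ν n m).toReal = 0 := by
  rw [ENNReal.toReal_eq_zero_iff] at h ⊢
  rcases h with h | h
  · exact Or.inl (le_antisymm (h ▸ pp_le_right μ ν n m) zero_le)
  · exact absurd h (am_ne_top ν m)

lemma cc_mul_left (n m : ℕ) :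
    cc μ ν n m * (am μ n).toReal = (pp μ ν n m).toReal / (am ν m).toReal := by
  rcases eq_or_ne ((am μ n).toReal) 0 with h | h
  · rw [h, mul_zero, pp_toReal_zero_left μ ν h, zero_div]
  · rw [cc, div_mul_eq_mul_div, mul_comm ((am μ n).toReal) ((am ν m).toReal),
      mul_div_mul_right _ _ h]

/-! ### summability -/

lemma summable_pp (H : μ univ = ν univ) (m : ℕ) :
    Summable (fun n => (pp μ ν n m).toReal) := by
  apply ENNReal.summable_toReal
  rw [colsum μ ν H m]
  exact am_ne_top ν m

lemma tsum_pp (H : μ univ = ν univ) (m : ℕ) :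
    ∑' n, (pp μ ν n m).toReal = (am ν m).toReal := by
  rw [← ENNReal.tsum_toReal_eq (fun n => pp_ne_top μ ν n m), colsum μ ν H m]

lemma summable_pp_row (H : μ univ = ν univ) (n : ℕ) :
    Summable (fun m => (pp μ ν n m).toReal) := by
  apply ENNReal.summable_toReal
  rw [rowsum μ ν H n]
  exact am_ne_top μ n

lemma tsum_pp_row (H : μ univ = ν univ) (n : ℕ) :
    ∑' m, (pp μ ν n m).toReal = (am μ n).toReal := by
  rw [← ENNReal.tsum_toReal_eq (fun m => pp_ne_top μ ν n m), rowsum μ ν H n]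

/-! ### the integrals over pieces -/

noncomputable def Ii (μ : Measure X) [SigmaFinite μ] (h : X → ℝ) (n : ℕ) : ℝ :=
  ∫ x in pc μ n, h x ∂μ

lemma Ii_congr {h g : X → ℝ} (hg : h =ᵐ[μ] g) (n : ℕ) : Ii μ h n = Ii μ g n :=
  integral_congr_ae (ae_restrict_of_ae hg)

instance (n : ℕ) : IsFiniteMeasure (μ.restrict (pc μ n)) :=
  ⟨by rw [Measure.restrict_apply_univ]; exact (am_ne_top μ n).lt_top⟩

lemma integrableOn_pc (h : Lp ℝ ⊤ μ) (n : ℕ) : IntegrableOn (⇑h) (pc μ n) μ :=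
  ((Lp.memLp h).restrict _).integrable le_top

lemma Lp_ae_bound (h : Lp ℝ ⊤ μ) : ∀ᵐ x ∂μ, |h x| ≤ ‖h‖ := by
  have h1 : ∀ᵐ x ∂μ, (‖h x‖₊ : ℝ≥0∞) ≤ eLpNormEssSup (⇑h) μ := ae_le_eLpNormEssSup
  have hfin : eLpNormEssSup (⇑h) μ ≠ ⊤ := by
    have h2 := Lp.eLpNorm_lt_top h
    rwa [eLpNorm_exponent_top, lt_top_iff_ne_top] at h2
  filter_upwards [h1] with x hx
  have h3 := ENNReal.toReal_mono hfin hx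
  rw [ENNReal.coe_toReal, coe_nnnorm, Real.norm_eq_abs] at h3
  rw [Lp.norm_def, eLpNorm_exponent_top]
  exact h3

lemma abs_Ii_le (h : Lp ℝ ⊤ μ) (n : ℕ) : |Ii μ (⇑h) n| ≤ ‖h‖ * (am μ n).toReal := by
  rw [Ii, ← Real.norm_eq_abs]
  have hb : ∀ᵐ x ∂(μ.restrict (pc μ n)), ‖h x‖ ≤ ‖h‖ := by
    filter_upwards [ae_restrict_of_ae (Lp_ae_bound μ h)] with x hx
    rwa [Real.norm_eq_abs]
  calc ‖∫ x in pc μ n, h x ∂μ‖ ≤ ∫ x in pc μ n, ‖h x‖ ∂μ :=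
        norm_integral_le_integral_norm _
    _ ≤ ∫ _ in pc μ n, ‖h‖ ∂μ := by
        apply integral_mono_ae ((integrableOn_pc μ h n).norm) (integrable_const _) hb
    _ = (μ (pc μ n)).toReal • ‖h‖ := by rw [setIntegral_const]; rfl
    _ = ‖h‖ * (am μ n).toReal := by rw [smul_eq_mul, mul_comm]; rfl

lemma term_abs_le (h : Lp ℝ ⊤ μ) (n m : ℕ) :
    |cc μ ν n m * Ii μ (⇑h) n| ≤ (‖h‖ / (am ν m).toReal) * (pp μ ν n m).toReal := by
  rw [abs_mul, abs_of_nonneg (cc_nonneg μ ν n m)]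
  calc cc μ ν n m * |Ii μ (⇑h) n| ≤ cc μ ν n m * (‖h‖ * (am μ n).toReal) := by
        apply mul_le_mul_of_nonneg_left (abs_Ii_le μ h n) (cc_nonneg μ ν n m)
    _ = ‖h‖ * (cc μ ν n m * (am μ n).toReal) := by ring
    _ = ‖h‖ * ((pp μ ν n m).toReal / (am ν m).toReal) := by rw [cc_mul_left]
    _ = (‖h‖ / (am ν m).toReal) * (pp μ ν n m).toReal := by ring

lemma summable_term (H : μ univ = ν univ) (h : Lp ℝ ⊤ μ) (m : ℕ) :
    Summable (fun n => cc μ ν n m * Ii μ (⇑h) n) := by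
  apply Summable.of_abs
  apply Summable.of_nonneg_of_le (fun n => abs_nonneg _) (term_abs_le μ ν h · m)
  exact (summable_pp μ ν H m).mul_left _

lemma abs_tsum_le' {f g : ℕ → ℝ} (hfg : ∀ n, |f n| ≤ g n) (hg : Summable g) :
    |∑' n, f n| ≤ ∑' n, g n := by
  have habs : Summable (fun n => |f n|) :=
    Summable.of_nonneg_of_le (fun n => abs_nonneg _) hfg hg
  calc |∑' n, f n| ≤ ∑' n, |f n| := by
        simpa [Real.norm_eq_abs] using
          norm_tsum_le_tsum_norm (f := f) (by simpa [Real.norm_eq_abs] using habs)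
    _ ≤ ∑' n, g n := Summable.tsum_le_tsum hfg habs hg

lemma tsum_term_abs_le (H : μ univ = ν univ) (h : Lp ℝ ⊤ μ) (m : ℕ) :
    |∑' n, cc μ ν n m * Ii μ (⇑h) n| ≤ ‖h‖ := by
  rcases eq_or_ne ((am ν m).toReal) 0 with hz | hz
  · have hzero : ∀ n, cc μ ν n m * Ii μ (⇑h) n = 0 := by
      intro n
      have : cc μ ν n m = 0 := by rw [cc, pp_toReal_zero_right μ ν hz, zero_div]
      rw [this, zero_mul]
    simp only [hzero, tsum_zero, abs_zero]
    exact norm_nonneg h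
  have hsp := (summable_pp μ ν H m).mul_left (‖h‖ / (am ν m).toReal)
  calc |∑' n, cc μ ν n m * Ii μ (⇑h) n|
      ≤ ∑' n, (‖h‖ / (am ν m).toReal) * (pp μ ν n m).toReal :=
        abs_tsum_le' (fun n => term_abs_le μ ν h n m) hsp
    _ = (‖h‖ / (am ν m).toReal) * ((am ν m).toReal) := by
        rw [tsum_mul_left, tsum_pp μ ν H m]
    _ = ‖h‖ := by rw [div_mul_cancel₀]; exact hz

/-! ### The map `Tfun` -/

noncomputable def Tfun (μ : Measure X) (ν : Measure Y) [SigmaFinite μ] [SigmaFinite ν]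
    (h : X → ℝ) (y : Y) : ℝ :=
  ∑' n, cc μ ν n (spanningSetsIndex ν y) * Ii μ h n

lemma Tfun_eq_on_pc {h : X → ℝ} {m : ℕ} {y : Y} (hy : y ∈ pc ν m) :
    Tfun μ ν h y = ∑' n, cc μ ν n m * Ii μ h n := by
  have : spanningSetsIndex ν y = m := (spanningSetsIndex_eq_iff ν).2 hy
  rw [Tfun, this]

lemma abs_Tfun_le (H : μ univ = ν univ) (h : Lp ℝ ⊤ μ) (y : Y) :
    |Tfun μ ν (⇑h) y| ≤ ‖h‖ :=
  tsum_term_abs_le μ ν H h _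

lemma memTfun (H : μ univ = ν univ) (h : Lp ℝ ⊤ μ) : MemLp (Tfun μ ν (⇑h)) ⊤ ν := by
  apply memLp_top_of_bound ?_ ‖h‖
    (Filter.Eventually.of_forall fun y => by
      rw [Real.norm_eq_abs]; exact abs_Tfun_le μ ν H h y)
  have : Tfun μ ν (⇑h) =
      (fun m => ∑' n, cc μ ν n m * Ii μ (⇑h) n) ∘ spanningSetsIndex ν := rfl
  rw [this]
  exact (measurable_from_nat.comp (measurableSet_spanningSetsIndex ν)).aestronglyMeasurable

lemma Ii_add (h h' : Lp ℝ ⊤ μ) (n : ℕ) :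
    Ii μ (⇑(h + h')) n = Ii μ (⇑h) n + Ii μ (⇑h') n := by
  rw [Ii_congr μ (Lp.coeFn_add h h'), Ii]
  simp only [Pi.add_apply]
  rw [integral_add (integrableOn_pc μ h n) (integrableOn_pc μ h' n)]
  rfl

lemma Ii_smul (c : ℝ) (h : Lp ℝ ⊤ μ) (n : ℕ) :
    Ii μ (⇑(c • h)) n = c * Ii μ (⇑h) n := by
  rw [Ii_congr μ (Lp.coeFn_smul c h), Ii]
  simp only [Pi.smul_apply, smul_eq_mul]
  rw [integral_const_mul]
  rfl

lemma Tfun_add (H : μ univ = ν univ) (h h' : Lp ℝ ⊤ μ) :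
    Tfun μ ν (⇑(h + h')) = fun y => Tfun μ ν (⇑h) y + Tfun μ ν (⇑h') y := by
  funext y
  rw [Tfun, Tfun, Tfun]
  rw [← Summable.tsum_add (summable_term μ ν H h _) (summable_term μ ν H h' _)]
  apply tsum_congr
  intro n
  rw [Ii_add μ h h' n]
  ring

lemma Tfun_smul (H : μ univ = ν univ) (c : ℝ) (h : Lp ℝ ⊤ μ) :
    Tfun μ ν (⇑(c • h)) = fun y => c * Tfun μ ν (⇑h) y := by
  funext y
  rw [Tfun, Tfun, ← tsum_mul_left]
  apply tsum_congr
  intro n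
  rw [Ii_smul μ c h n]
  ring

noncomputable def TL (H : μ univ = ν univ) : Lp ℝ ⊤ μ →ₗ[ℝ] Lp ℝ ⊤ ν where
  toFun h := (memTfun μ ν H h).toLp (Tfun μ ν (⇑h))
  map_add' h h' := by
    rw [← MemLp.toLp_add (memTfun μ ν H h) (memTfun μ ν H h')]
    exact MemLp.toLp_congr _ _ (by rw [Tfun_add μ ν H h h']; rfl)
  map_smul' c h := by
    simp only [RingHom.id_apply]
    rw [← MemLp.toLp_const_smul c (memTfun μ ν H h)]
    exact MemLp.toLp_congr _ _ (by rw [Tfun_smul μ ν H c h]; rfl)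

lemma TL_coe (H : μ univ = ν univ) (h : Lp ℝ ⊤ μ) :
    ⇑(TL μ ν H h) =ᵐ[ν] Tfun μ ν (⇑h) :=
  MemLp.coeFn_toLp (memTfun μ ν H h)

lemma ae_good : ∀ᵐ y ∂ν, am ν (spanningSetsIndex ν y) ≠ 0 := by
  rw [Filter.eventually_iff, mem_ae_iff]
  apply measure_mono_null (t := ⋃ m ∈ {m : ℕ | am ν m = 0}, pc ν m)
  · intro y hy
    simp only [mem_compl_iff, mem_setOf_eq, not_not] at hy
    exact mem_biUnion hy (mem_disjointed_spanningSetsIndex ν y)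
  · exact (measure_biUnion_null_iff (to_countable _)).2 fun m hm => hm

/-! ### pointwise values -/

lemma summable_ccam (H : μ univ = ν univ) (m : ℕ) :
    Summable (fun n => cc μ ν n m * (am μ n).toReal) := by
  simp_rw [cc_mul_left μ ν]
  exact (summable_pp μ ν H m).div_const _

lemma tsum_ccam (H : μ univ = ν univ) {m : ℕ} (hm : am ν m ≠ 0) :
    ∑' n, cc μ ν n m * (am μ n).toReal = 1 := by
  simp_rw [cc_mul_left μ ν, div_eq_mul_inv]
  rw [tsum_mul_right, tsum_pp μ ν H m, ← div_eq_mul_inv, div_self]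
  exact ENNReal.toReal_ne_zero.mpr ⟨hm, am_ne_top ν m⟩

lemma Ii_nonneg (h : Lp ℝ ⊤ μ) (h0 : ∀ᵐ x ∂μ, 0 ≤ h x) (n : ℕ) : 0 ≤ Ii μ (⇑h) n :=
  integral_nonneg_of_ae (ae_restrict_of_ae h0)

lemma Tfun_nonneg (h : Lp ℝ ⊤ μ) (h0 : ∀ᵐ x ∂μ, 0 ≤ h x) (y : Y) :
    0 ≤ Tfun μ ν (⇑h) y :=
  tsum_nonneg fun n => mul_nonneg (cc_nonneg μ ν n _) (Ii_nonneg μ h h0 n)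

lemma Ii_le (h : Lp ℝ ⊤ μ) (hle : ∀ᵐ x ∂μ, h x ≤ 1) (n : ℕ) :
    Ii μ (⇑h) n ≤ (am μ n).toReal := by
  have : Ii μ (⇑h) n ≤ ∫ _ in pc μ n, (1 : ℝ) ∂μ :=
    integral_mono_ae (integrableOn_pc μ h n) (integrable_const _) (ae_restrict_of_ae hle)
  calc Ii μ (⇑h) n ≤ ∫ _ in pc μ n, (1 : ℝ) ∂μ := this
    _ = (am μ n).toReal := by rw [setIntegral_const, smul_eq_mul, mul_one]; rfl

lemma Tfun_le_one (H : μ univ = ν univ) (h : Lp ℝ ⊤ μ) (hle : ∀ᵐ x ∂μ, h x ≤ 1) :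
    ∀ᵐ y ∂ν, Tfun μ ν (⇑h) y ≤ 1 := by
  filter_upwards [ae_good ν] with y hy
  rw [Tfun]
  calc ∑' n, cc μ ν n (spanningSetsIndex ν y) * Ii μ (⇑h) n
      ≤ ∑' n, cc μ ν n (spanningSetsIndex ν y) * (am μ n).toReal :=
        Summable.tsum_le_tsum
          (fun n => mul_le_mul_of_nonneg_left (Ii_le μ h hle n) (cc_nonneg μ ν n _))
          (summable_term μ ν H h _) (summable_ccam μ ν H _)
    _ = 1 := tsum_ccam μ ν H hy

lemma Tfun_one (H : μ univ = ν univ) (h : Lp ℝ ⊤ μ) (h1 : ⇑h =ᵐ[μ] fun _ => (1 : ℝ)) :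
    ∀ᵐ y ∂ν, Tfun μ ν (⇑h) y = 1 := by
  have hI : ∀ n, Ii μ (⇑h) n = (am μ n).toReal := by
    intro n
    rw [Ii_congr μ h1, Ii, setIntegral_const, smul_eq_mul, mul_one]
    rfl
  filter_upwards [ae_good ν] with y hy
  rw [Tfun]
  simp_rw [hI]
  exact tsum_ccam μ ν H hy

/-! ### integral identities -/

lemma lintegral_eq_tsum (f : Y → ℝ≥0∞) :
    ∫⁻ y, f y ∂ν = ∑' m, ∫⁻ y in pc ν m, f y ∂ν := by
  rw [← setLIntegral_univ, ← iUnion_pc ν,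
    lintegral_iUnion (measurableSet_pc ν) (pairwise_disjoint_pc ν)]

lemma ofReal_Ii (h : Lp ℝ ⊤ μ) (h0 : ∀ᵐ x ∂μ, 0 ≤ h x) (n : ℕ) :
    ENNReal.ofReal (Ii μ (⇑h) n) = ∫⁻ x in pc μ n, ENNReal.ofReal (h x) ∂μ :=
  ofReal_integral_eq_lintegral_ofReal (integrableOn_pc μ h n) (ae_restrict_of_ae h0)

lemma lintegral_ofReal_eq_tsum (h : Lp ℝ ⊤ μ) (h0 : ∀ᵐ x ∂μ, 0 ≤ h x) :
    ∫⁻ x, ENNReal.ofReal (h x) ∂μ = ∑' n, ENNReal.ofReal (Ii μ (⇑h) n) := by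
  rw [lintegral_eq_tsum μ]
  exact tsum_congr fun n => (ofReal_Ii μ h h0 n).symm

lemma ofReal_cc_mul_am (n m : ℕ) :
    ENNReal.ofReal (cc μ ν n m) * am ν m = pp μ ν n m / am μ n := by
  rcases eq_or_ne (am ν m) 0 with hb | hb
  · have hp : pp μ ν n m = 0 := le_antisymm (hb ▸ pp_le_right μ ν n m) zero_le
    rw [hb, mul_zero, hp, ENNReal.zero_div]
  rcases eq_or_ne (am μ n) 0 with ha | ha
  · have hp : pp μ ν n m = 0 := le_antisymm (ha ▸ pp_le_left μ ν n m) zero_le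
    have hc : cc μ ν n m = 0 := by
      rw [cc, hp, ENNReal.toReal_zero, zero_div]
    rw [hc, ENNReal.ofReal_zero, zero_mul, hp, ENNReal.zero_div]
  · have ha' : (am μ n).toReal ≠ 0 := ENNReal.toReal_ne_zero.mpr ⟨ha, am_ne_top μ n⟩
    have hb' : (am ν m).toReal ≠ 0 := ENNReal.toReal_ne_zero.mpr ⟨hb, am_ne_top ν m⟩
    have hpos : 0 < (am μ n).toReal * (am ν m).toReal := by
      apply lt_of_le_of_ne (mul_nonneg ENNReal.toReal_nonneg ENNReal.toReal_nonneg)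
      exact fun hcon => (mul_ne_zero ha' hb') hcon.symm
    rw [cc, ENNReal.ofReal_div_of_pos hpos, ENNReal.ofReal_mul ENNReal.toReal_nonneg,
      ENNReal.ofReal_toReal (pp_ne_top μ ν n m), ENNReal.ofReal_toReal (am_ne_top μ n),
      ENNReal.ofReal_toReal (am_ne_top ν m)]
    rw [div_eq_mul_inv, div_eq_mul_inv,
      ENNReal.mul_inv (Or.inl ha) (Or.inl (am_ne_top μ n))]
    calc pp μ ν n m * ((am μ n)⁻¹ * (am ν m)⁻¹) * am ν m
        = pp μ ν n m * (am μ n)⁻¹ * ((am ν m)⁻¹ * am ν m) := by ring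
      _ = pp μ ν n m * (am μ n)⁻¹ := by
          rw [ENNReal.inv_mul_cancel hb (am_ne_top ν m), mul_one]

lemma tsum_ofReal_cc_Ii (H : μ univ = ν univ) (h : Lp ℝ ⊤ μ)
    (h0 : ∀ᵐ x ∂μ, 0 ≤ h x) (n : ℕ) :
    ∑' m, ENNReal.ofReal (cc μ ν n m * Ii μ (⇑h) n) * am ν m
      = ENNReal.ofReal (Ii μ (⇑h) n) := by
  have hterm : ∀ m, ENNReal.ofReal (cc μ ν n m * Ii μ (⇑h) n) * am ν m
      = ENNReal.ofReal (Ii μ (⇑h) n) * (pp μ ν n m / am μ n) := by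
    intro m
    rw [ENNReal.ofReal_mul (cc_nonneg μ ν n m), mul_comm (ENNReal.ofReal (cc μ ν n m)),
      mul_assoc, ofReal_cc_mul_am μ ν n m]
  rw [tsum_congr hterm, ENNReal.tsum_mul_left]
  rcases eq_or_ne (am μ n) 0 with ha | ha
  · have hI0 : Ii μ (⇑h) n = 0 := by
      rw [Ii, Measure.restrict_eq_zero.mpr ha, integral_zero_measure]
    rw [hI0]
    simp
  · have hsum : ∑' m, pp μ ν n m / am μ n = 1 := by
      simp_rw [div_eq_mul_inv]
      rw [ENNReal.tsum_mul_right, rowsum μ ν H n, ← div_eq_mul_inv,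
        ENNReal.div_self ha (am_ne_top μ n)]
    rw [hsum, mul_one]

lemma lintegral_Tfun (H : μ univ = ν univ) (h : Lp ℝ ⊤ μ) (h0 : ∀ᵐ x ∂μ, 0 ≤ h x) :
    ∫⁻ y, ENNReal.ofReal (Tfun μ ν (⇑h) y) ∂ν = ∫⁻ x, ENNReal.ofReal (h x) ∂μ := by
  rw [lintegral_eq_tsum ν]
  have hm : ∀ m, ∫⁻ y in pc ν m, ENNReal.ofReal (Tfun μ ν (⇑h) y) ∂ν
      = ∑' n, ENNReal.ofReal (cc μ ν n m * Ii μ (⇑h) n) * am ν m := by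
    intro m
    rw [setLIntegral_congr_fun_ae (measurableSet_pc ν m)
      (ae_of_all _ (fun y hy => by rw [Tfun_eq_on_pc μ ν hy]))]
    rw [setLIntegral_const]
    rw [ENNReal.ofReal_tsum_of_nonneg
      (fun n => mul_nonneg (cc_nonneg μ ν n m) (Ii_nonneg μ h h0 n))
      (summable_term μ ν H h m)]
    rw [ENNReal.tsum_mul_right]
    rfl
  rw [tsum_congr hm, ENNReal.tsum_comm, tsum_congr (tsum_ofReal_cc_Ii μ ν H h h0)]
  exact (lintegral_ofReal_eq_tsum μ h h0).symm

lemma lintegral_Tfun_mul (H : μ univ = ν univ) (h : Lp ℝ ⊤ μ) (g : Lp ℝ ⊤ ν)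
    (h0 : ∀ᵐ x ∂μ, 0 ≤ h x) (g0 : ∀ᵐ y ∂ν, 0 ≤ g y) :
    ∫⁻ y, ENNReal.ofReal (Tfun μ ν (⇑h) y * g y) ∂ν
      = ∑' n, ∑' m, ENNReal.ofReal (cc μ ν n m)
          * (ENNReal.ofReal (Ii μ (⇑h) n) * ENNReal.ofReal (Ii ν (⇑g) m)) := by
  rw [lintegral_eq_tsum ν]
  have hm : ∀ m, ∫⁻ y in pc ν m, ENNReal.ofReal (Tfun μ ν (⇑h) y * g y) ∂ν
      = ∑' n, ENNReal.ofReal (cc μ ν n m)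
          * (ENNReal.ofReal (Ii μ (⇑h) n) * ENNReal.ofReal (Ii ν (⇑g) m)) := by
    intro m
    have hC : 0 ≤ ∑' n, cc μ ν n m * Ii μ (⇑h) n :=
      tsum_nonneg fun n => mul_nonneg (cc_nonneg μ ν n m) (Ii_nonneg μ h h0 n)
    rw [setLIntegral_congr_fun_ae (measurableSet_pc ν m)
      (ae_of_all _ (fun y hy => by
        rw [Tfun_eq_on_pc μ ν hy, ENNReal.ofReal_mul hC]))]
    have hg : AEMeasurable (fun y => ENNReal.ofReal (g y)) (ν.restrict (pc ν m)) :=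
      ENNReal.measurable_ofReal.comp_aemeasurable
        (Lp.aestronglyMeasurable g).aemeasurable.restrict
    rw [lintegral_const_mul'' _ hg]
    rw [← ofReal_integral_eq_lintegral_ofReal (integrableOn_pc ν g m)
      (ae_restrict_of_ae g0)]
    rw [ENNReal.ofReal_tsum_of_nonneg
      (fun n => mul_nonneg (cc_nonneg μ ν n m) (Ii_nonneg μ h h0 n))
      (summable_term μ ν H h m)]
    rw [← ENNReal.tsum_mul_right]
    apply tsum_congr
    intro n
    rw [ENNReal.ofReal_mul (cc_nonneg μ ν n m), mul_assoc]
    rfl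
  rw [tsum_congr hm, ENNReal.tsum_comm]

end DSaux

/-- A doubly substochastic operator from `(X,μ)` to `(Y,ν)`, bundled together with its
dual doubly substochastic operator. -/
structure DSSPair {X Y : Type*} [MeasurableSpace X] [MeasurableSpace Y]
    (μ : Measure X) (ν : Measure Y) where
  T : Lp ℝ ⊤ μ →ₗ[ℝ] Lp ℝ ⊤ ν
  T' : Lp ℝ ⊤ ν →ₗ[ℝ] Lp ℝ ⊤ μ
  posT : ∀ h : Lp ℝ ⊤ μ, (∀ᵐ x ∂μ, 0 ≤ h x) → ∀ᵐ y ∂ν, 0 ≤ (T h) y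
  posT' : ∀ g : Lp ℝ ⊤ ν, (∀ᵐ y ∂ν, 0 ≤ g y) → ∀ᵐ x ∂μ, 0 ≤ (T' g) x
  subT : ∀ h : Lp ℝ ⊤ μ, (∀ᵐ x ∂μ, h x ≤ 1) → ∀ᵐ y ∂ν, (T h) y ≤ 1
  subT' : ∀ g : Lp ℝ ⊤ ν, (∀ᵐ y ∂ν, g y ≤ 1) → ∀ᵐ x ∂μ, (T' g) x ≤ 1
  subintT : ∀ h : Lp ℝ ⊤ μ, (∀ᵐ x ∂μ, 0 ≤ h x) →
    ∫⁻ y, ENNReal.ofReal ((T h) y) ∂ν ≤ ∫⁻ x, ENNReal.ofReal (h x) ∂μ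
  subintT' : ∀ g : Lp ℝ ⊤ ν, (∀ᵐ y ∂ν, 0 ≤ g y) →
    ∫⁻ x, ENNReal.ofReal ((T' g) x) ∂μ ≤ ∫⁻ y, ENNReal.ofReal (g y) ∂ν
  duality : ∀ (h : Lp ℝ ⊤ μ) (g : Lp ℝ ⊤ ν),
    (∀ᵐ x ∂μ, 0 ≤ h x) → (∀ᵐ y ∂ν, 0 ≤ g y) →
    ∫⁻ y, ENNReal.ofReal ((T h) y * g y) ∂ν
      = ∫⁻ x, ENNReal.ofReal (h x * (T' g) x) ∂μ

namespace DSaux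

variable {X Y : Type*} [MeasurableSpace X] [MeasurableSpace Y]
  (μ : Measure X) (ν : Measure Y) [SigmaFinite μ] [SigmaFinite ν]

lemma ofReal_coe_congr {Z : Type*} [MeasurableSpace Z] {ρ : Measure Z} {f g : Z → ℝ}
    (hfg : f =ᵐ[ρ] g) :
    ∫⁻ z, ENNReal.ofReal (f z) ∂ρ = ∫⁻ z, ENNReal.ofReal (g z) ∂ρ :=
  lintegral_congr_ae (hfg.mono fun z hz => by simp only [hz])

noncomputable def mkPair (H : μ univ = ν univ) : DSSPair μ ν where
  T := TL μ ν H
  T' := TL ν μ H.symm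
  posT h h0 := by
    filter_upwards [TL_coe μ ν H h] with y hy
    rw [hy]
    exact Tfun_nonneg μ ν h h0 y
  posT' g g0 := by
    filter_upwards [TL_coe ν μ H.symm g] with x hx
    rw [hx]
    exact Tfun_nonneg ν μ g g0 x
  subT h hle := by
    filter_upwards [TL_coe μ ν H h, Tfun_le_one μ ν H h hle] with y hy h1
    rw [hy]
    exact h1
  subT' g hle := by
    filter_upwards [TL_coe ν μ H.symm g, Tfun_le_one ν μ H.symm g hle] with x hx h1
    rw [hx]
    exact h1
  subintT h h0 := by
    rw [ofReal_coe_congr (TL_coe μ ν H h)]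
    exact (lintegral_Tfun μ ν H h h0).le
  subintT' g g0 := by
    rw [ofReal_coe_congr (TL_coe ν μ H.symm g)]
    exact (lintegral_Tfun ν μ H.symm g g0).le
  duality h g h0 g0 := by
    have hL : (fun y => ENNReal.ofReal ((TL μ ν H h) y * g y))
        =ᵐ[ν] fun y => ENNReal.ofReal (Tfun μ ν (⇑h) y * g y) :=
      (TL_coe μ ν H h).mono fun y hy => by simp only [hy]
    have hR : (fun x => ENNReal.ofReal (h x * (TL ν μ H.symm g) x))
        =ᵐ[μ] fun x => ENNReal.ofReal (Tfun ν μ (⇑g) x * h x) :=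
      (TL_coe ν μ H.symm g).mono fun x hx => by simp only [hx, mul_comm]
    rw [lintegral_congr_ae hL, lintegral_congr_ae hR,
      lintegral_Tfun_mul μ ν H h g h0 g0,
      lintegral_Tfun_mul ν μ H.symm g h g0 h0, ENNReal.tsum_comm]
    apply tsum_congr; intro n
    apply tsum_congr; intro m
    rw [← cc_symm μ ν m n,
      mul_comm (ENNReal.ofReal (Ii ν (⇑g) n)) (ENNReal.ofReal (Ii μ (⇑h) m))]

lemma mkPair_unital (H : μ univ = ν univ) (h : Lp ℝ ⊤ μ)
    (h1 : ⇑h =ᵐ[μ] fun _ => (1 : ℝ)) :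
    ⇑((mkPair μ ν H).T h) =ᵐ[ν] fun _ => (1 : ℝ) := by
  filter_upwards [TL_coe μ ν H h, Tfun_one μ ν H h h1] with y hy hone
  rw [show ((mkPair μ ν H).T h) y = (TL μ ν H h) y from rfl, hy]
  exact hone

lemma mkPair_int (H : μ univ = ν univ) (h : Lp ℝ ⊤ μ) (h0 : ∀ᵐ x ∂μ, 0 ≤ h x) :
    ∫⁻ y, ENNReal.ofReal (((mkPair μ ν H).T h) y) ∂ν
      = ∫⁻ x, ENNReal.ofReal (h x) ∂μ := by
  rw [show ((mkPair μ ν H).T h : Y → ℝ) = (TL μ ν H h : Y → ℝ) from rfl,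
    ofReal_coe_congr (TL_coe μ ν H h)]
  exact lintegral_Tfun μ ν H h h0

end DSaux

theorem stmt9 {X Y : Type*} [MeasurableSpace X] [MeasurableSpace Y]
    (μ : Measure X) (ν : Measure Y) [SigmaFinite μ] [SigmaFinite ν] :
    (∃ D : DSSPair μ ν,
      (∀ h : Lp ℝ ⊤ μ, (⇑h =ᵐ[μ] fun _ => (1 : ℝ)) →
        ⇑(D.T h) =ᵐ[ν] fun _ => (1 : ℝ)) ∧
      (∀ h : Lp ℝ ⊤ μ, (∀ᵐ x ∂μ, 0 ≤ h x) →
        ∫⁻ y, ENNReal.ofReal ((D.T h) y) ∂ν = ∫⁻ x, ENNReal.ofReal (h x) ∂μ)) ↔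
    μ Set.univ = ν Set.univ := by
  constructor
  · rintro ⟨D, hunit, hint⟩
    set h1 : Lp ℝ ⊤ μ := (memLp_top_const (1 : ℝ)).toLp _ with hh1
    have hc : ⇑h1 =ᵐ[μ] fun _ => (1 : ℝ) := MemLp.coeFn_toLp _
    have h0 : ∀ᵐ x ∂μ, 0 ≤ h1 x := hc.mono fun x hx => by rw [hx]; norm_num
    have hT := hunit h1 hc
    have hI := hint h1 h0
    have hμ : ∫⁻ x, ENNReal.ofReal (h1 x) ∂μ = μ Set.univ := by
      rw [DSaux.ofReal_coe_congr hc]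
      simp [lintegral_one]
    have hν : ∫⁻ y, ENNReal.ofReal ((D.T h1) y) ∂ν = ν Set.univ := by
      rw [DSaux.ofReal_coe_congr hT]
      simp [lintegral_one]
    rw [← hμ, ← hI, hν]
  · intro H
    exact ⟨DSaux.mkPair μ ν H, DSaux.mkPair_unital μ ν H, DSaux.mkPair_int μ ν H⟩
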